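/- For n ≥ 0 let d_n denote the number of finite sequences (compositions) of odd positive integers that have even length and whose entries sum to n (so d₀ = 1, counting the empty sequence). Then in the ring ℤ⟦x⟧ of formal power series with integer coefficients, (1 − 3x² + x⁴) · (∑_{n≥0} d_n x^n) = 1 − 2x² + x⁴; equivalently, ∑_{n≥0} d_n x^n = 1/(1 − (x/(1 − x²))²). -/

import Mathlib

/-- The number of compositions of `n` into odd parts of even length
(with the empty composition counted for `n = 0`). -/
noncomputable def d (n : ℕ) : ℕ :=
  {l : List ℕ | (∀ x ∈ l, Odd x) ∧ Even l.length ∧ l.sum = n}.ncard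

/-- Odd compositions of `n` whose length has parity `k`. -/
def A (k n : ℕ) : Set (List ℕ) :=
  {l | (∀ x ∈ l, Odd x) ∧ l.length % 2 = k ∧ l.sum = n}

lemma finA (k n : ℕ) : (A k n).Finite := by
  have h : A k n ⊆ Set.range (fun c : Composition n => c.blocks) := by
    rintro l ⟨ho, -, hs⟩
    exact ⟨⟨l, fun hi => (ho _ hi).pos, hs⟩, rfl⟩
  exact (Set.finite_range _).subset h

noncomputable def N (k n : ℕ) : ℕ := (A k n).ncard

lemma decomp (k n : ℕ) (hk : k ≤ 1) (hn : 2 ≤ n) :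
    A k n = (List.cons 1) '' A (1 - k) (n - 1) ∪
      (fun l : List ℕ => (l.headI + 2) :: l.tail) '' (A k (n - 2) \ {[]}) := by
  ext l
  constructor
  · rintro ⟨ho, hl, hs⟩
    match l with
    | [] => simp at hs; omega
    | a :: t =>
      have ha := Nat.odd_iff.mp (ho a (by simp))
      simp only [List.length_cons, List.sum_cons] at hl hs
      by_cases h1 : a = 1
      · left
        exact ⟨t, ⟨fun x hx => ho x (by simp [hx]), by omega, by omega⟩, by simp [h1]⟩
      · right
        have ha3 : 3 ≤ a := by omega
        refine ⟨(a - 2) :: t, ⟨⟨?_, ?_, ?_⟩, by simp⟩, ?_⟩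
        · intro x hx
          rcases List.mem_cons.mp hx with rfl | hx
          · exact Nat.odd_iff.mpr (by omega)
          · exact ho x (by simp [hx])
        · simpa using hl
        · simp; omega
        · show ((a - 2) + 2) :: t = a :: t
          congr 1
          omega
  · rintro (⟨t, ⟨ho, hl, hs⟩, rfl⟩ | ⟨m, ⟨⟨ho, hl, hs⟩, hne⟩, rfl⟩)
    · refine ⟨?_, ?_, ?_⟩
      · intro x hx
        rcases List.mem_cons.mp hx with rfl | hx
        · exact ⟨0, rfl⟩
        · exact ho x hx
      · simp; omega
      · simp; omega
    · simp only [Set.mem_singleton_iff] at hne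
      obtain ⟨a, t, rfl⟩ := List.exists_cons_of_ne_nil hne
      have ha := Nat.odd_iff.mp (ho a (by simp))
      simp only [List.length_cons, List.sum_cons] at hl hs
      show ((a + 2) :: t) ∈ A k n
      refine ⟨?_, ?_, ?_⟩
      · intro x hx
        rcases List.mem_cons.mp hx with rfl | hx
        · exact Nat.odd_iff.mpr (by omega)
        · exact ho x (by simp [hx])
      · simpa using hl
      · simp; omega

lemma step (k n : ℕ) (hk : k ≤ 1) (hn : 2 ≤ n) :
    N k n + (if k = 0 ∧ n = 2 then 1 else 0) = N (1 - k) (n - 1) + N k (n - 2) := by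
  have hdis : Disjoint ((List.cons 1) '' A (1 - k) (n - 1))
      ((fun l : List ℕ => (l.headI + 2) :: l.tail) '' (A k (n - 2) \ {[]})) := by
    rw [Set.disjoint_left]
    rintro x ⟨t, ht, rfl⟩ ⟨m, ⟨⟨ho, -, -⟩, hne⟩, hm⟩
    simp only [Set.mem_singleton_iff] at hne
    obtain ⟨a, s, rfl⟩ := List.exists_cons_of_ne_nil hne
    have ha := Nat.odd_iff.mp (ho a (by simp))
    have hm' : (a + 2) :: s = 1 :: t := hm
    simp only [List.cons.injEq] at hm'
    omega
  have h1 : ((List.cons 1) '' A (1 - k) (n - 1)).ncard = N (1 - k) (n - 1) :=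
    Set.ncard_image_of_injective _ (fun a b h => by injection h)
  have h2 : ((fun l : List ℕ => (l.headI + 2) :: l.tail) '' (A k (n - 2) \ {[]})).ncard
      = (A k (n - 2) \ ({[]} : Set (List ℕ))).ncard := by
    apply Set.ncard_image_of_injOn
    rintro x ⟨-, hx⟩ y ⟨-, hy⟩ hxy
    simp only [Set.mem_singleton_iff] at hx hy
    obtain ⟨a, s, rfl⟩ := List.exists_cons_of_ne_nil hx
    obtain ⟨b, t, rfl⟩ := List.exists_cons_of_ne_nil hy
    have hxy' : (a + 2) :: s = (b + 2) :: t := hxy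
    simp only [List.cons.injEq] at hxy'
    obtain ⟨h1, h2⟩ := hxy'
    simp [h2]
    omega
  have h3 : (A k (n - 2) \ ({[]} : Set (List ℕ))).ncard + (if k = 0 ∧ n = 2 then 1 else 0)
      = N k (n - 2) := by
    by_cases hmem : ([] : List ℕ) ∈ A k (n - 2)
    · have hk0 : k = 0 ∧ n = 2 := by
        obtain ⟨-, hl, hs⟩ := hmem
        simp at hl hs
        omega
      rw [if_pos hk0]
      exact Set.ncard_diff_singleton_add_one hmem (finA _ _)
    · have hk0 : ¬ (k = 0 ∧ n = 2) := by
        rintro ⟨rfl, rfl⟩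
        exact hmem ⟨by simp, by simp, by simp⟩
      rw [if_neg hk0, Set.diff_singleton_eq_self hmem]
      rfl
  calc N k n + (if k = 0 ∧ n = 2 then 1 else 0)
      = ((List.cons 1) '' A (1 - k) (n - 1)).ncard
        + (((fun l : List ℕ => (l.headI + 2) :: l.tail) '' (A k (n - 2) \ {[]})).ncard
        + (if k = 0 ∧ n = 2 then 1 else 0)) := by
        rw [N, decomp k n hk hn,
          Set.ncard_union_eq hdis ((finA _ _).image _) (((finA _ _).diff).image _)]
        ring
    _ = N (1 - k) (n - 1) + N k (n - 2) := by rw [h1, h2, h3]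

lemma dN (n : ℕ) : d n = N 0 n := by
  unfold d N A
  congr 1
  ext l
  simp [Nat.even_iff]

lemma sum_mod (l : List ℕ) (h : ∀ x ∈ l, Odd x) : l.sum % 2 = l.length % 2 := by
  induction l with
  | nil => rfl
  | cons a t ih =>
    have ha := Nat.odd_iff.mp (h a (by simp))
    have ht := ih (fun x hx => h x (by simp [hx]))
    simp only [List.sum_cons, List.length_cons]
    omega

lemma d_odd (n : ℕ) (h : n % 2 = 1) : d n = 0 := by
  unfold d
  convert Set.ncard_empty (List ℕ)
  ext l
  simp only [Set.mem_setOf_eq, Set.mem_empty_iff_false, iff_false, not_and]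
  intro ho hl hs
  have := sum_mod l ho
  rw [Nat.even_iff] at hl
  omega

lemma d_zero : d 0 = 1 := by
  unfold d
  convert Set.ncard_singleton ([] : List ℕ)
  ext l
  simp only [Set.mem_setOf_eq, Set.mem_singleton_iff]
  constructor
  · rintro ⟨ho, -, hs⟩
    rcases l with _ | ⟨a, t⟩
    · rfl
    · have := (ho a (by simp)).pos
      simp at hs
      omega
  · rintro rfl
    exact ⟨by simp, by simp, by simp⟩

lemma d_two : d 2 = 1 := by
  unfold d
  convert Set.ncard_singleton ([1, 1] : List ℕ)
  ext l
  simp only [Set.mem_setOf_eq, Set.mem_singleton_iff]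
  constructor
  · rintro ⟨ho, hl, hs⟩
    match l with
    | [] => simp at hs
    | [a] => simp [Nat.even_iff] at hl
    | a :: b :: t =>
      have ha := (ho a (by simp)).pos
      have hb := (ho b (by simp)).pos
      simp only [List.sum_cons] at hs
      have ht : t.sum = 0 := by omega
      have hte : t = [] := by
        rcases t with _ | ⟨c, s⟩
        · rfl
        · have := (ho c (by simp)).pos
          simp at ht
          omega
      subst hte
      simp at hs ⊢
      omega
  · rintro rfl
    refine ⟨?_, by simp, by simp⟩
    intro x hx
    simp at hx
    simp [hx]

lemma d_rec (m : ℕ) : d (m + 4) + d m = 3 * d (m + 2) + (if m = 0 then 1 else 0) := by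
  have h1 := step 0 (m + 4) (by omega) (by omega)
  have h2 := step 1 (m + 3) (by omega) (by omega)
  have h3 := step 0 (m + 2) (by omega) (by omega)
  rw [show m + 4 - 1 = m + 3 from by omega, show m + 4 - 2 = m + 2 from by omega,
    if_neg (by omega : ¬(0 = 0 ∧ m + 4 = 2))] at h1
  rw [show m + 3 - 1 = m + 2 from by omega, show m + 3 - 2 = m + 1 from by omega,
    if_neg (by simp : ¬(1 = 0 ∧ m + 3 = 2)), show 1 - 1 = 0 from rfl] at h2
  rw [show m + 2 - 1 = m + 1 from by omega, show m + 2 - 2 = m from by omega] at h3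
  simp only [Nat.sub_zero] at h1 h3
  rw [dN, dN, dN]
  by_cases hm : m = 0
  · subst hm
    rw [if_pos (by simp)] at h3 ⊢
    omega
  · rw [if_neg (by omega)] at h3 ⊢
    omega

open PowerSeries in
theorem stmt_17 :
    (1 - 3 * (X : ℤ⟦X⟧) ^ 2 + X ^ 4) * PowerSeries.mk (fun n => (d n : ℤ)) =
      1 - 2 * X ^ 2 + X ^ 4 := by
  have key : ∀ m : ℕ, (d (m + 4) : ℤ) + d m = 3 * d (m + 2) + (if m = 0 then 1 else 0) := by
    intro m
    have h := d_rec m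
    split_ifs at h ⊢ with hm
    · exact_mod_cast h
    · exact_mod_cast h
  set M : ℤ⟦X⟧ := PowerSeries.mk (fun n => (d n : ℤ)) with hM
  have L : (1 - 3 * (X : ℤ⟦X⟧) ^ 2 + X ^ 4) * M
      = M - (M * X ^ 2 + M * X ^ 2 + M * X ^ 2) + M * X ^ 4 := by ring
  have R : (1 : ℤ⟦X⟧) - 2 * X ^ 2 + X ^ 4 = 1 - ((X : ℤ⟦X⟧) ^ 2 + X ^ 2) + X ^ 4 := by ring
  rw [L, R]
  ext n
  simp only [map_add, map_sub, coeff_mul_X_pow', coeff_one, coeff_X_pow, hM, coeff_mk]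
  rcases n with _ | _ | _ | _ | m
  · norm_num [d_zero]
  · norm_num [d_odd 1 rfl]
  · norm_num [d_two, d_zero]
  · norm_num [d_odd 3 rfl, d_odd 1 rfl]
  · have hk := key m
    rw [show m + 1 + 1 + 1 + 1 = m + 4 from by omega]
    rw [if_pos (by omega : 2 ≤ m + 4), if_pos (by omega : 4 ≤ m + 4),
      show m + 4 - 2 = m + 2 from by omega, show m + 4 - 4 = m from by omega]
    by_cases hm : m = 0
    · subst hm
      rw [if_pos rfl] at hk
      norm_num at hk ⊢
      omega
    · rw [if_neg hm] at hk
      rw [if_neg (by omega : ¬m + 4 = 4)]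
      omega
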